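/- arXiv:2403.03057 — 3 statements merged into one kernel-verified Lean document; each statement's English description precedes it below -/
import Mathlib

section
/- Soundness of local analyses: for every set of lifelines L ⊆ ℒ, every δ ∈ ℕ, every interaction i ∈ 𝕀(L), and every multi-trace μ ∈ 𝕄(L), if (i,μ) ⤳* Ok then ω_{L,δ}(i,μ) holds, i.e., for every lifeline l ∈ L the local analysis (rmv_{L∖{l}}(i), μ_|l[0..δ]) ⤳* Ok succeeds. -/
open scoped Classical

namespace RV

/-- A communication action: a lifeline, a kind (`true` = emission `!`,
`false` = reception `?`) and a message. -/
structure Action (Λ M : Type) where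
  lifeline : Λ
  kind : Bool
  msg : M

/-- The interaction language: empty interaction, actions, the three loop
operators and the four binary operators. -/
inductive Interaction (Λ M : Type) : Type where
  | empty : Interaction Λ M
  | act : Action Λ M → Interaction Λ M
  | loopS : Interaction Λ M → Interaction Λ M
  | loopW : Interaction Λ M → Interaction Λ M
  | loopP : Interaction Λ M → Interaction Λ M
  | strict : Interaction Λ M → Interaction Λ M → Interaction Λ M
  | seq : Interaction Λ M → Interaction Λ M → Interaction Λ M
  | par : Interaction Λ M → Interaction Λ M → Interaction Λ M
  | alt : Interaction Λ M → Interaction Λ M → Interaction Λ M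

variable {Λ M : Type}

/-- `i ∈ 𝕀(L)` : all actions of `i` occur on lifelines belonging to `L`. -/
def Interaction.lifelinesIn (L : Set Λ) : Interaction Λ M → Prop
  | .empty => True
  | .act a => a.lifeline ∈ L
  | .loopS i => i.lifelinesIn L
  | .loopW i => i.lifelinesIn L
  | .loopP i => i.lifelinesIn L
  | .strict i1 i2 => i1.lifelinesIn L ∧ i2.lifelinesIn L
  | .seq i1 i2 => i1.lifelinesIn L ∧ i2.lifelinesIn L
  | .par i1 i2 => i1.lifelinesIn L ∧ i2.lifelinesIn L
  | .alt i1 i2 => i1.lifelinesIn L ∧ i2.lifelinesIn L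

/-- Lifeline removal `rmv_H` on interactions : actions occurring on a
lifeline of `H` are replaced by the empty interaction, the term structure
is preserved (no simplification). -/
noncomputable def rmv (H : Set Λ) : Interaction Λ M → Interaction Λ M
  | .empty => .empty
  | .act a => if a.lifeline ∈ H then .empty else .act a
  | .loopS i => .loopS (rmv H i)
  | .loopW i => .loopW (rmv H i)
  | .loopP i => .loopP (rmv H i)
  | .strict i1 i2 => .strict (rmv H i1) (rmv H i2)
  | .seq i1 i2 => .seq (rmv H i1) (rmv H i2)
  | .par i1 i2 => .par (rmv H i1) (rmv H i2)
  | .alt i1 i2 => .alt (rmv H i1) (rmv H i2)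

/-- The subterm of an interaction at a position (Dewey notation,
`false` = child 1, `true` = child 2); `none` when the position is invalid.
The positions of `i` are exactly those `p` with `(subtermAt i p).isSome`,
and the symbol `i(p)` is the head symbol of `subtermAt i p`. -/
def subtermAt : Interaction Λ M → List Bool → Option (Interaction Λ M)
  | i, [] => some i
  | .loopS i, false :: p => subtermAt i p
  | .loopW i, false :: p => subtermAt i p
  | .loopP i, false :: p => subtermAt i p
  | .strict i1 _, false :: p => subtermAt i1 p
  | .strict _ i2, true :: p => subtermAt i2 p
  | .seq i1 _, false :: p => subtermAt i1 p
  | .seq _ i2, true :: p => subtermAt i2 p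
  | .par i1 _, false :: p => subtermAt i1 p
  | .par _ i2, true :: p => subtermAt i2 p
  | .alt i1 _, false :: p => subtermAt i1 p
  | .alt _ i2, true :: p => subtermAt i2 p
  | _, _ => none

/-- A multi-trace : one local trace per lifeline (components on lifelines
outside the relevant set `L` are required to be empty, see
`MultiTrace.over`). -/
abbrev MultiTrace (Λ M : Type) := Λ → List (Action Λ M)

namespace MultiTrace

/-- `a ∧ μ` : prepend action `a` to the component of `μ` on `θ(a)`. -/
noncomputable def prepend (a : Action Λ M) (μ : MultiTrace Λ M) : MultiTrace Λ M :=
  fun l => if l = a.lifeline then a :: μ l else μ l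

/-- `μ ∧ a` : append action `a` to the component of `μ` on `θ(a)`. -/
noncomputable def append (μ : MultiTrace Λ M) (a : Action Λ M) : MultiTrace Λ M :=
  fun l => if l = a.lifeline then μ l ++ [a] else μ l

/-- The empty multi-trace `ε_L`. -/
def eps : MultiTrace Λ M := fun _ => []

/-- `μ ∈ 𝕄(L)` : components vanish outside `L` and every action of the
component on `l` occurs on `l`. -/
def isOver (L : Set Λ) (μ : MultiTrace Λ M) : Prop :=
  (∀ l ∉ L, μ l = []) ∧ ∀ l, ∀ a ∈ μ l, a.lifeline = l

/-- Lifeline removal `rmv_H` on multi-traces : restriction of the tuple of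
components to `L ∖ H` (removed components become empty). -/
noncomputable def rmv (H : Set Λ) (μ : MultiTrace Λ M) : MultiTrace Λ M :=
  fun l => if l ∈ H then [] else μ l

/-- Strict sequencing `μ1 ; μ2` of multi-traces : componentwise
concatenation. -/
def concat (μ1 μ2 : MultiTrace Λ M) : MultiTrace Λ M := fun l => μ1 l ++ μ2 l

/-- Multi-prefix relation : componentwise word prefix. -/
def isPrefixOf (μ' μ : MultiTrace Λ M) : Prop := ∀ l, μ' l <+: μ l

end MultiTrace

/-- Interleaving `μ ∈ μ1 || μ2` of multi-traces. -/
inductive MTShuffle : MultiTrace Λ M → MultiTrace Λ M → MultiTrace Λ M → Prop where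
  | nilL (μ : MultiTrace Λ M) : MTShuffle MultiTrace.eps μ μ
  | nilR (μ : MultiTrace Λ M) : MTShuffle μ MultiTrace.eps μ
  | left {μ1 μ2 μ : MultiTrace Λ M} (a : Action Λ M) :
      MTShuffle μ1 μ2 μ → MTShuffle (MultiTrace.prepend a μ1) μ2 (MultiTrace.prepend a μ)
  | right {μ1 μ2 μ : MultiTrace Λ M} (a : Action Λ M) :
      MTShuffle μ1 μ2 μ → MTShuffle μ1 (MultiTrace.prepend a μ2) (MultiTrace.prepend a μ)

/-- Interleaving (shuffle) `t ∈ t1 || t2` of global traces (words). -/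
inductive ListShuffle {α : Type} : List α → List α → List α → Prop where
  | nil : ListShuffle [] [] []
  | left {t1 t2 t : List α} (a : α) : ListShuffle t1 t2 t → ListShuffle (a :: t1) t2 (a :: t)
  | right {t1 t2 t : List α} (a : α) : ListShuffle t1 t2 t → ListShuffle t1 (a :: t2) (a :: t)

/-- Conflict predicate `t ⫫ l` : the trace `t` contains an action on `l`. -/
def conflicts (t : List (Action Λ M)) (l : Λ) : Prop := ∃ a ∈ t, a.lifeline = l

/-- Weak sequencing `t ∈ t1 ;⫫ t2` of global traces : actions of `t2` may
be anticipated only when the remaining part of `t1` has no conflict on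
their lifeline. -/
inductive WeakSeq : List (Action Λ M) → List (Action Λ M) → List (Action Λ M) → Prop where
  | nilL (t : List (Action Λ M)) : WeakSeq [] t t
  | nilR (t : List (Action Λ M)) : WeakSeq t [] t
  | left {t1 t2 t : List (Action Λ M)} (a1 : Action Λ M) :
      WeakSeq t1 t2 t → WeakSeq (a1 :: t1) t2 (a1 :: t)
  | right {t1 t2 t : List (Action Λ M)} (a2 : Action Λ M) :
      ¬ conflicts t1 a2.lifeline → WeakSeq t1 t2 t → WeakSeq t1 (a2 :: t2) (a2 :: t)

/-- Projection `π_L` of a global trace onto a multi-trace. -/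
noncomputable def proj : List (Action Λ M) → MultiTrace Λ M
  | [] => MultiTrace.eps
  | a :: t => MultiTrace.prepend a (proj t)

/-- Elementwise strict sequencing on sets of multi-traces. -/
def concatSet (S1 S2 : Set (MultiTrace Λ M)) : Set (MultiTrace Λ M) :=
  {μ | ∃ μ1 ∈ S1, ∃ μ2 ∈ S2, μ = MultiTrace.concat μ1 μ2}

/-- Elementwise interleaving on sets of multi-traces. -/
def shuffleSet (S1 S2 : Set (MultiTrace Λ M)) : Set (MultiTrace Λ M) :=
  {μ | ∃ μ1 ∈ S1, ∃ μ2 ∈ S2, MTShuffle μ1 μ2 μ}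

/-- `S^{;n}`. -/
def powConcat (S : Set (MultiTrace Λ M)) : ℕ → Set (MultiTrace Λ M)
  | 0 => {MultiTrace.eps}
  | n + 1 => concatSet S (powConcat S n)

/-- Kleene closure `S^{;*}`. -/
def kleeneConcat (S : Set (MultiTrace Λ M)) : Set (MultiTrace Λ M) := ⋃ n, powConcat S n

/-- `S^{||n}`. -/
def powShuffle (S : Set (MultiTrace Λ M)) : ℕ → Set (MultiTrace Λ M)
  | 0 => {MultiTrace.eps}
  | n + 1 => shuffleSet S (powShuffle S n)

/-- Kleene closure `S^{||*}`. -/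
def kleeneShuffle (S : Set (MultiTrace Λ M)) : Set (MultiTrace Λ M) := ⋃ n, powShuffle S n

/-- The multi-trace semantics `σ_L : 𝕀(L) → 𝒫(𝕄(L))`. -/
noncomputable def sem : Interaction Λ M → Set (MultiTrace Λ M)
  | .empty => {MultiTrace.eps}
  | .act a => {MultiTrace.prepend a MultiTrace.eps}
  | .alt i1 i2 => sem i1 ∪ sem i2
  | .strict i1 i2 => concatSet (sem i1) (sem i2)
  | .seq i1 i2 => concatSet (sem i1) (sem i2)
  | .par i1 i2 => shuffleSet (sem i1) (sem i2)
  | .loopS i => kleeneConcat (sem i)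
  | .loopW i => kleeneConcat (sem i)
  | .loopP i => kleeneShuffle (sem i)

/-- Multi-prefix closure `\overline{S}` of a set of multi-traces. -/
def prefixClosure (S : Set (MultiTrace Λ M)) : Set (MultiTrace Λ M) :=
  {μ' | ∃ μ ∈ S, MultiTrace.isPrefixOf μ' μ}

/-- Termination predicate `i ↓` : `i` accepts the empty (multi-)trace. -/
inductive Terminates : Interaction Λ M → Prop where
  | empty : Terminates .empty
  | altL {i1 i2 : Interaction Λ M} : Terminates i1 → Terminates (.alt i1 i2)
  | altR {i1 i2 : Interaction Λ M} : Terminates i2 → Terminates (.alt i1 i2)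
  | strict {i1 i2 : Interaction Λ M} : Terminates i1 → Terminates i2 → Terminates (.strict i1 i2)
  | seq {i1 i2 : Interaction Λ M} : Terminates i1 → Terminates i2 → Terminates (.seq i1 i2)
  | par {i1 i2 : Interaction Λ M} : Terminates i1 → Terminates i2 → Terminates (.par i1 i2)
  | loopS (i : Interaction Λ M) : Terminates (.loopS i)
  | loopW (i : Interaction Λ M) : Terminates (.loopW i)
  | loopP (i : Interaction Λ M) : Terminates (.loopP i)

/-- Collision predicate `i ⫫̸ l` : every trace of `i` contains an action
on lifeline `l`. -/
inductive Collides : Interaction Λ M → Λ → Prop where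
  | act {a : Action Λ M} {l : Λ} : a.lifeline = l → Collides (.act a) l
  | alt {i1 i2 : Interaction Λ M} {l : Λ} :
      Collides i1 l → Collides i2 l → Collides (.alt i1 i2) l
  | strictL {i1 i2 : Interaction Λ M} {l : Λ} : Collides i1 l → Collides (.strict i1 i2) l
  | strictR {i1 i2 : Interaction Λ M} {l : Λ} : Collides i2 l → Collides (.strict i1 i2) l
  | seqL {i1 i2 : Interaction Λ M} {l : Λ} : Collides i1 l → Collides (.seq i1 i2) l
  | seqR {i1 i2 : Interaction Λ M} {l : Λ} : Collides i2 l → Collides (.seq i1 i2) l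
  | parL {i1 i2 : Interaction Λ M} {l : Λ} : Collides i1 l → Collides (.par i1 i2) l
  | parR {i1 i2 : Interaction Λ M} {l : Λ} : Collides i2 l → Collides (.par i1 i2) l

/-- Pruning relation `i ≃^⫫_l i'`. -/
inductive Prunes : Interaction Λ M → Λ → Interaction Λ M → Prop where
  | empty (l : Λ) : Prunes .empty l .empty
  | act {a : Action Λ M} {l : Λ} : a.lifeline ≠ l → Prunes (.act a) l (.act a)
  | strict {i1 i2 i1' i2' : Interaction Λ M} {l : Λ} :
      Prunes i1 l i1' → Prunes i2 l i2' → Prunes (.strict i1 i2) l (.strict i1' i2')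
  | seq {i1 i2 i1' i2' : Interaction Λ M} {l : Λ} :
      Prunes i1 l i1' → Prunes i2 l i2' → Prunes (.seq i1 i2) l (.seq i1' i2')
  | par {i1 i2 i1' i2' : Interaction Λ M} {l : Λ} :
      Prunes i1 l i1' → Prunes i2 l i2' → Prunes (.par i1 i2) l (.par i1' i2')
  | altBoth {i1 i2 i1' i2' : Interaction Λ M} {l : Λ} :
      Prunes i1 l i1' → Prunes i2 l i2' → Prunes (.alt i1 i2) l (.alt i1' i2')
  | altL {i1 i2 i1' : Interaction Λ M} {l : Λ} :
      Prunes i1 l i1' → Collides i2 l → Prunes (.alt i1 i2) l i1'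
  | altR {i1 i2 i2' : Interaction Λ M} {l : Λ} :
      Prunes i2 l i2' → Collides i1 l → Prunes (.alt i1 i2) l i2'
  | loopS {i1 i1' : Interaction Λ M} {l : Λ} :
      Prunes i1 l i1' → Prunes (.loopS i1) l (.loopS i1')
  | loopW {i1 i1' : Interaction Λ M} {l : Λ} :
      Prunes i1 l i1' → Prunes (.loopW i1) l (.loopW i1')
  | loopP {i1 i1' : Interaction Λ M} {l : Λ} :
      Prunes i1 l i1' → Prunes (.loopP i1) l (.loopP i1')
  | loopSElim {i1 : Interaction Λ M} {l : Λ} : Collides i1 l → Prunes (.loopS i1) l .empty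
  | loopWElim {i1 : Interaction Λ M} {l : Λ} : Collides i1 l → Prunes (.loopW i1) l .empty
  | loopPElim {i1 : Interaction Λ M} {l : Λ} : Collides i1 l → Prunes (.loopP i1) l .empty

/-- Execution relation `i →[a@p] i'` of the structural operational
semantics (positions over `{1,2}` encoded by `false`/`true`). -/
inductive Executes : Interaction Λ M → Action Λ M → List Bool → Interaction Λ M → Prop where
  | act (a : Action Λ M) : Executes (.act a) a [] .empty
  | altL {i1 i1' : Interaction Λ M} {a : Action Λ M} {p : List Bool} (i2 : Interaction Λ M) :
      Executes i1 a p i1' → Executes (.alt i1 i2) a (false :: p) i1'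
  | altR {i2 i2' : Interaction Λ M} {a : Action Λ M} {p : List Bool} (i1 : Interaction Λ M) :
      Executes i2 a p i2' → Executes (.alt i1 i2) a (true :: p) i2'
  | parL {i1 i1' : Interaction Λ M} {a : Action Λ M} {p : List Bool} (i2 : Interaction Λ M) :
      Executes i1 a p i1' → Executes (.par i1 i2) a (false :: p) (.par i1' i2)
  | parR {i2 i2' : Interaction Λ M} {a : Action Λ M} {p : List Bool} (i1 : Interaction Λ M) :
      Executes i2 a p i2' → Executes (.par i1 i2) a (true :: p) (.par i1 i2')
  | strictL {i1 i1' : Interaction Λ M} {a : Action Λ M} {p : List Bool} (i2 : Interaction Λ M) :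
      Executes i1 a p i1' → Executes (.strict i1 i2) a (false :: p) (.strict i1' i2)
  | strictR {i1 i2 i2' : Interaction Λ M} {a : Action Λ M} {p : List Bool} :
      Terminates i1 → Executes i2 a p i2' → Executes (.strict i1 i2) a (true :: p) i2'
  | seqL {i1 i1' : Interaction Λ M} {a : Action Λ M} {p : List Bool} (i2 : Interaction Λ M) :
      Executes i1 a p i1' → Executes (.seq i1 i2) a (false :: p) (.seq i1' i2)
  | seqR {i1 i1' i2 i2' : Interaction Λ M} {a : Action Λ M} {p : List Bool} :
      Prunes i1 a.lifeline i1' → Executes i2 a p i2' →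
      Executes (.seq i1 i2) a (true :: p) (.seq i1' i2')
  | loopS {i1 i1' : Interaction Λ M} {a : Action Λ M} {p : List Bool} :
      Executes i1 a p i1' → Executes (.loopS i1) a (false :: p) (.strict i1' (.loopS i1))
  | loopW {i1 i1' i'' : Interaction Λ M} {a : Action Λ M} {p : List Bool} :
      Executes i1 a p i1' → Prunes (.loopW i1) a.lifeline i'' →
      Executes (.loopW i1) a (false :: p) (.seq i'' (.seq i1' (.loopW i1)))
  | loopP {i1 i1' : Interaction Λ M} {a : Action Λ M} {p : List Bool} :
      Executes i1 a p i1' → Executes (.loopP i1) a (false :: p) (.par i1' (.loopP i1))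

/-- Vertices of the analysis graph : `Ok` or a pair of an interaction and a
multi-trace over a current set of lifelines `L`. -/
inductive Vertex (Λ M : Type) : Type where
  | ok : Vertex Λ M
  | node : Set Λ → Interaction Λ M → MultiTrace Λ M → Vertex Λ M

/-- Rule `⤳_o` : emission of the `Ok` verdict on an empty multi-trace. -/
inductive StepOk : Vertex Λ M → Vertex Λ M → Prop where
  | mk (L : Set Λ) (i : Interaction Λ M) :
      StepOk (.node L i MultiTrace.eps) .ok

/-- Rule `⤳_r` : removal of a set `H` of lifelines (with `∅ ⊊ H ⊊ L`)
whose components are all empty. -/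
inductive StepRmv : Vertex Λ M → Vertex Λ M → Prop where
  | mk (L H : Set Λ) (i : Interaction Λ M) (μ : MultiTrace Λ M) :
      H.Nonempty → H ⊂ L → (∀ l ∈ H, μ l = []) →
      StepRmv (.node L i μ) (.node (L \ H) (rmv H i) (MultiTrace.rmv H μ))

/-- Rule `⤳_e` : simultaneous consumption of the action at the head of a
component of the multi-trace and execution of a matching action of the
interaction. -/
inductive StepExec : Vertex Λ M → Vertex Λ M → Prop where
  | mk (L : Set Λ) (i i' : Interaction Λ M) (a : Action Λ M) (p : List Bool)
      (μ : MultiTrace Λ M) :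
      a.lifeline ∈ L → Executes i a p i' →
      StepExec (.node L i (MultiTrace.prepend a μ)) (.node L i' μ)

/-- The transition relation `⤳` of the analysis graph. -/
def Step (v w : Vertex Λ M) : Prop := StepOk v w ∨ StepRmv v w ∨ StepExec v w

/-- One-unambiguity `a ⊑1∈ i` : in the projection of `i` onto `θ(a)`,
there is a unique position at which `a` is immediately executable. -/
def OneUnambiguous (L : Set Λ) (a : Action Λ M) (i : Interaction Λ M) : Prop :=
  ∃! p : List Bool, ∃ i'' : Interaction Λ M, Executes (rmv (L \ {a.lifeline}) i) a p i''

/-- A local trace on lifeline `l` viewed as a multi-trace over `{l}`. -/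
noncomputable def localMT (l : Λ) (w : List (Action Λ M)) : MultiTrace Λ M :=
  fun l' => if l' = l then w else []

/-- Right-nested `seq`-composition of a list of interactions (`∅` for the
empty list). -/
def seqComp : List (Interaction Λ M) → Interaction Λ M
  | [] => .empty
  | [i] => i
  | i :: rest => .seq i (seqComp rest)

/-- The operational trace semantics `σ_op(i)` generated by the two rules
`i↓ ⟹ ε ∈ σ_op(i)` and `i →[a@p] i' ∧ t ∈ σ_op(i') ⟹ a.t ∈ σ_op(i)`. -/
inductive OpTrace : Interaction Λ M → List (Action Λ M) → Prop where
  | empty {i : Interaction Λ M} : Terminates i → OpTrace i []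
  | step {i i' : Interaction Λ M} {a : Action Λ M} {p : List Bool} {t : List (Action Λ M)} :
      Executes i a p i' → OpTrace i' t → OpTrace i (a :: t)

end RV

namespace RV

section Aux

variable {Λ M : Type}

/-! ### Basic unfolding lemmas for `rmv` -/

@[simp] lemma rmv_empty (H : Set Λ) : rmv H (.empty : Interaction Λ M) = .empty := rfl
@[simp] lemma rmv_strict (H : Set Λ) (a b : Interaction Λ M) :
    rmv H (.strict a b) = .strict (rmv H a) (rmv H b) := rfl
@[simp] lemma rmv_seq (H : Set Λ) (a b : Interaction Λ M) :
    rmv H (.seq a b) = .seq (rmv H a) (rmv H b) := rfl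
@[simp] lemma rmv_par (H : Set Λ) (a b : Interaction Λ M) :
    rmv H (.par a b) = .par (rmv H a) (rmv H b) := rfl
@[simp] lemma rmv_alt (H : Set Λ) (a b : Interaction Λ M) :
    rmv H (.alt a b) = .alt (rmv H a) (rmv H b) := rfl
@[simp] lemma rmv_loopS (H : Set Λ) (a : Interaction Λ M) :
    rmv H (.loopS a) = .loopS (rmv H a) := rfl
@[simp] lemma rmv_loopW (H : Set Λ) (a : Interaction Λ M) :
    rmv H (.loopW a) = .loopW (rmv H a) := rfl
@[simp] lemma rmv_loopP (H : Set Λ) (a : Interaction Λ M) :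
    rmv H (.loopP a) = .loopP (rmv H a) := rfl
lemma rmv_act (H : Set Λ) (a : Action Λ M) :
    rmv H (.act a) = if a.lifeline ∈ H then .empty else .act a := rfl

/-! ### Lifelines bookkeeping -/

lemma lifelinesIn_mono {S T : Set Λ} (hST : S ⊆ T) :
    ∀ {i : Interaction Λ M}, i.lifelinesIn S → i.lifelinesIn T := by
  intro i
  induction i with
  | empty => exact fun h => h
  | act a => exact fun h => hST h
  | loopS i ih => exact ih
  | loopW i ih => exact ih
  | loopP i ih => exact ih
  | strict i1 i2 ih1 ih2 => exact fun h => ⟨ih1 h.1, ih2 h.2⟩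
  | seq i1 i2 ih1 ih2 => exact fun h => ⟨ih1 h.1, ih2 h.2⟩
  | par i1 i2 ih1 ih2 => exact fun h => ⟨ih1 h.1, ih2 h.2⟩
  | alt i1 i2 ih1 ih2 => exact fun h => ⟨ih1 h.1, ih2 h.2⟩

lemma prune_lifelinesIn {S : Set Λ} :
    ∀ {i : Interaction Λ M} {l i'}, Prunes i l i' → i.lifelinesIn S → i'.lifelinesIn S := by
  intro i l i' h
  induction h with
  | empty => exact fun h => h
  | act _ => exact fun h => h
  | strict _ _ ih1 ih2 => exact fun h => ⟨ih1 h.1, ih2 h.2⟩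
  | seq _ _ ih1 ih2 => exact fun h => ⟨ih1 h.1, ih2 h.2⟩
  | par _ _ ih1 ih2 => exact fun h => ⟨ih1 h.1, ih2 h.2⟩
  | altBoth _ _ ih1 ih2 => exact fun h => ⟨ih1 h.1, ih2 h.2⟩
  | altL _ _ ih => exact fun h => ih h.1
  | altR _ _ ih => exact fun h => ih h.2
  | loopS _ ih => exact ih
  | loopW _ ih => exact ih
  | loopP _ ih => exact ih
  | loopSElim _ => exact fun _ => trivial
  | loopWElim _ => exact fun _ => trivial
  | loopPElim _ => exact fun _ => trivial

lemma exec_lifelinesIn {S : Set Λ} :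
    ∀ {i i' : Interaction Λ M} {a p}, Executes i a p i' → i.lifelinesIn S → i'.lifelinesIn S := by
  intro i i' a p h
  induction h with
  | act _ => exact fun _ => trivial
  | altL _ _ ih => exact fun h => ih h.1
  | altR _ _ ih => exact fun h => ih h.2
  | parL _ _ ih => exact fun h => ⟨ih h.1, h.2⟩
  | parR _ _ ih => exact fun h => ⟨h.1, ih h.2⟩
  | strictL _ _ ih => exact fun h => ⟨ih h.1, h.2⟩
  | strictR _ _ ih => exact fun h => ih h.2
  | seqL _ _ ih => exact fun h => ⟨ih h.1, h.2⟩
  | seqR hp _ ih => exact fun h => ⟨prune_lifelinesIn hp h.1, ih h.2⟩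
  | loopS _ ih => exact fun h => ⟨ih h, h⟩
  | loopW _ hp ih => exact fun h => ⟨prune_lifelinesIn hp h, ih h, h⟩
  | loopP _ ih => exact fun h => ⟨ih h, h⟩

lemma exec_action_mem {S : Set Λ} :
    ∀ {i i' : Interaction Λ M} {a p}, Executes i a p i' → i.lifelinesIn S → a.lifeline ∈ S := by
  intro i i' a p h
  induction h with
  | act _ => exact fun h => h
  | altL _ _ ih => exact fun h => ih h.1
  | altR _ _ ih => exact fun h => ih h.2
  | parL _ _ ih => exact fun h => ih h.1
  | parR _ _ ih => exact fun h => ih h.2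
  | strictL _ _ ih => exact fun h => ih h.1
  | strictR _ _ ih => exact fun h => ih h.2
  | seqL _ _ ih => exact fun h => ih h.1
  | seqR _ _ ih => exact fun h => ih h.2
  | loopS _ ih => exact ih
  | loopW _ _ ih => exact ih
  | loopP _ ih => exact ih

/-! ### Inert interactions (no action subterm) -/

/-- An interaction containing no action leaf. -/
def Inert : Interaction Λ M → Prop
  | .empty => True
  | .act _ => False
  | .loopS i => Inert i
  | .loopW i => Inert i
  | .loopP i => Inert i
  | .strict i1 i2 => Inert i1 ∧ Inert i2
  | .seq i1 i2 => Inert i1 ∧ Inert i2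
  | .par i1 i2 => Inert i1 ∧ Inert i2
  | .alt i1 i2 => Inert i1 ∧ Inert i2

lemma inert_no_exec : ∀ {i i' : Interaction Λ M} {a p}, Executes i a p i' → Inert i → False := by
  intro i i' a p h
  induction h with
  | act _ => exact fun h => h
  | altL _ _ ih => exact fun h => ih h.1
  | altR _ _ ih => exact fun h => ih h.2
  | parL _ _ ih => exact fun h => ih h.1
  | parR _ _ ih => exact fun h => ih h.2
  | strictL _ _ ih => exact fun h => ih h.1
  | strictR _ _ ih => exact fun h => ih h.2
  | seqL _ _ ih => exact fun h => ih h.1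
  | seqR _ _ ih => exact fun h => ih h.2
  | loopS _ ih => exact ih
  | loopW _ _ ih => exact ih
  | loopP _ ih => exact ih

lemma inert_term : ∀ {i : Interaction Λ M}, Inert i → Terminates i := by
  intro i
  induction i with
  | empty => exact fun _ => .empty
  | act a => exact fun h => h.elim
  | loopS i _ => exact fun _ => .loopS i
  | loopW i _ => exact fun _ => .loopW i
  | loopP i _ => exact fun _ => .loopP i
  | strict _ _ ih1 ih2 => exact fun h => .strict (ih1 h.1) (ih2 h.2)
  | seq _ _ ih1 ih2 => exact fun h => .seq (ih1 h.1) (ih2 h.2)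
  | par _ _ ih1 ih2 => exact fun h => .par (ih1 h.1) (ih2 h.2)
  | alt _ _ ih1 _ => exact fun h => .altL (ih1 h.1)

lemma opTrace_nil {i : Interaction Λ M} (h : OpTrace i []) : Terminates i := by
  cases h with | empty h => exact h

lemma opTrace_cons {i : Interaction Λ M} {a t} (h : OpTrace i (a :: t)) :
    ∃ p i', Executes i a p i' ∧ OpTrace i' t := by
  cases h with | step hex htr => exact ⟨_, _, hex, htr⟩

lemma empty_lang {t : List (Action Λ M)} (h : OpTrace .empty t) : t = [] := by
  cases h with
  | empty _ => rfl
  | step hex _ => cases hex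

lemma inert_lang {i : Interaction Λ M} {t} (hi : Inert i) (h : OpTrace i t) : t = [] := by
  cases h with
  | empty _ => rfl
  | step hex _ => exact (inert_no_exec hex hi).elim

lemma prune_at_l_inert {l : Λ} :
    ∀ {i i' : Interaction Λ M}, Prunes i l i' → i.lifelinesIn {l} → Inert i' := by
  intro i i' h
  induction h with
  | empty => exact fun _ => trivial
  | act hne => exact fun h => (hne h).elim
  | strict _ _ ih1 ih2 => exact fun h => ⟨ih1 h.1, ih2 h.2⟩
  | seq _ _ ih1 ih2 => exact fun h => ⟨ih1 h.1, ih2 h.2⟩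
  | par _ _ ih1 ih2 => exact fun h => ⟨ih1 h.1, ih2 h.2⟩
  | altBoth _ _ ih1 ih2 => exact fun h => ⟨ih1 h.1, ih2 h.2⟩
  | altL _ _ ih => exact fun h => ih h.1
  | altR _ _ ih => exact fun h => ih h.2
  | loopS _ ih => exact ih
  | loopW _ ih => exact ih
  | loopP _ ih => exact ih
  | loopSElim _ => exact fun _ => trivial
  | loopWElim _ => exact fun _ => trivial
  | loopPElim _ => exact fun _ => trivial

/-! ### Pruning: totality and termination facts -/

lemma prune_term : ∀ {i : Interaction Λ M} {l i'}, Prunes i l i' → Terminates i' → Terminates i := by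
  intro i l i' h
  induction h with
  | empty => exact fun h => h
  | act _ => exact fun h => h
  | strict _ _ ih1 ih2 => intro h; cases h with | strict h1 h2 => exact .strict (ih1 h1) (ih2 h2)
  | seq _ _ ih1 ih2 => intro h; cases h with | seq h1 h2 => exact .seq (ih1 h1) (ih2 h2)
  | par _ _ ih1 ih2 => intro h; cases h with | par h1 h2 => exact .par (ih1 h1) (ih2 h2)
  | altBoth _ _ ih1 ih2 =>
    intro h
    cases h with
    | altL h1 => exact .altL (ih1 h1)
    | altR h2 => exact .altR (ih2 h2)
  | altL _ _ ih => exact fun h => .altL (ih h)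
  | altR _ _ ih => exact fun h => .altR (ih h)
  | loopS _ _ => exact fun _ => .loopS _
  | loopW _ _ => exact fun _ => .loopW _
  | loopP _ _ => exact fun _ => .loopP _
  | loopSElim _ => exact fun _ => .loopS _
  | loopWElim _ => exact fun _ => .loopW _
  | loopPElim _ => exact fun _ => .loopP _

lemma prunes_total : ∀ (i : Interaction Λ M) (l : Λ), (∃ i', Prunes i l i') ∨ Collides i l := by
  intro i l
  induction i with
  | empty => exact .inl ⟨_, .empty l⟩
  | act a =>
    by_cases h : a.lifeline = l
    · exact .inr (.act h)
    · exact .inl ⟨_, .act h⟩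
  | strict i1 i2 ih1 ih2 =>
    rcases ih1 with ⟨i1', h1⟩ | c1
    · rcases ih2 with ⟨i2', h2⟩ | c2
      · exact .inl ⟨_, .strict h1 h2⟩
      · exact .inr (.strictR c2)
    · exact .inr (.strictL c1)
  | seq i1 i2 ih1 ih2 =>
    rcases ih1 with ⟨i1', h1⟩ | c1
    · rcases ih2 with ⟨i2', h2⟩ | c2
      · exact .inl ⟨_, .seq h1 h2⟩
      · exact .inr (.seqR c2)
    · exact .inr (.seqL c1)
  | par i1 i2 ih1 ih2 =>
    rcases ih1 with ⟨i1', h1⟩ | c1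
    · rcases ih2 with ⟨i2', h2⟩ | c2
      · exact .inl ⟨_, .par h1 h2⟩
      · exact .inr (.parR c2)
    · exact .inr (.parL c1)
  | alt i1 i2 ih1 ih2 =>
    rcases ih1 with ⟨i1', h1⟩ | c1
    · rcases ih2 with ⟨i2', h2⟩ | c2
      · exact .inl ⟨_, .altBoth h1 h2⟩
      · exact .inl ⟨_, .altL h1 c2⟩
    · rcases ih2 with ⟨i2', h2⟩ | c2
      · exact .inl ⟨_, .altR h2 c1⟩
      · exact .inr (.alt c1 c2)
  | loopS i ih =>
    rcases ih with ⟨i', h⟩ | c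
    · exact .inl ⟨_, .loopS h⟩
    · exact .inl ⟨_, .loopSElim c⟩
  | loopW i ih =>
    rcases ih with ⟨i', h⟩ | c
    · exact .inl ⟨_, .loopW h⟩
    · exact .inl ⟨_, .loopWElim c⟩
  | loopP i ih =>
    rcases ih with ⟨i', h⟩ | c
    · exact .inl ⟨_, .loopP h⟩
    · exact .inl ⟨_, .loopPElim c⟩

lemma term_prune : ∀ {i : Interaction Λ M}, Terminates i →
    ∀ l, ∃ i', Prunes i l i' ∧ Terminates i' := by
  intro i h
  induction h with
  | empty => exact fun l => ⟨_, .empty l, .empty⟩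
  | @altL i1 i2 _ ih =>
    intro l
    obtain ⟨i1', hp1, ht1⟩ := ih l
    rcases prunes_total i2 l with ⟨i2', hp2⟩ | c2
    · exact ⟨_, .altBoth hp1 hp2, .altL ht1⟩
    · exact ⟨_, .altL hp1 c2, ht1⟩
  | @altR i1 i2 _ ih =>
    intro l
    obtain ⟨i2', hp2, ht2⟩ := ih l
    rcases prunes_total i1 l with ⟨i1', hp1⟩ | c1
    · exact ⟨_, .altBoth hp1 hp2, .altR ht2⟩
    · exact ⟨_, .altR hp2 c1, ht2⟩
  | strict _ _ ih1 ih2 =>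
    intro l
    obtain ⟨i1', hp1, ht1⟩ := ih1 l
    obtain ⟨i2', hp2, ht2⟩ := ih2 l
    exact ⟨_, .strict hp1 hp2, .strict ht1 ht2⟩
  | seq _ _ ih1 ih2 =>
    intro l
    obtain ⟨i1', hp1, ht1⟩ := ih1 l
    obtain ⟨i2', hp2, ht2⟩ := ih2 l
    exact ⟨_, .seq hp1 hp2, .seq ht1 ht2⟩
  | par _ _ ih1 ih2 =>
    intro l
    obtain ⟨i1', hp1, ht1⟩ := ih1 l
    obtain ⟨i2', hp2, ht2⟩ := ih2 l
    exact ⟨_, .par hp1 hp2, .par ht1 ht2⟩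
  | loopS i =>
    intro l
    rcases prunes_total i l with ⟨i', h⟩ | c
    · exact ⟨_, .loopS h, .loopS _⟩
    · exact ⟨_, .loopSElim c, .empty⟩
  | loopW i =>
    intro l
    rcases prunes_total i l with ⟨i', h⟩ | c
    · exact ⟨_, .loopW h, .loopW _⟩
    · exact ⟨_, .loopWElim c, .empty⟩
  | loopP i =>
    intro l
    rcases prunes_total i l with ⟨i', h⟩ | c
    · exact ⟨_, .loopP h, .loopP _⟩
    · exact ⟨_, .loopPElim c, .empty⟩

/-! ### `rmv` commutes with the operational semantics -/

lemma term_rmv {H : Set Λ} : ∀ {i : Interaction Λ M}, Terminates i → Terminates (rmv H i) := by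
  intro i h
  induction h with
  | empty => exact .empty
  | altL _ ih => exact .altL ih
  | altR _ ih => exact .altR ih
  | strict _ _ ih1 ih2 => exact .strict ih1 ih2
  | seq _ _ ih1 ih2 => exact .seq ih1 ih2
  | par _ _ ih1 ih2 => exact .par ih1 ih2
  | loopS i => exact .loopS _
  | loopW i => exact .loopW _
  | loopP i => exact .loopP _

lemma collides_rmv {H : Set Λ} :
    ∀ {i : Interaction Λ M} {l}, Collides i l → l ∉ H → Collides (rmv H i) l := by
  intro i l h
  induction h with
  | @act a l ha =>
    intro hl
    rw [rmv_act, if_neg (by rw [ha]; exact hl)]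
    exact .act ha
  | alt _ _ ih1 ih2 => exact fun hl => .alt (ih1 hl) (ih2 hl)
  | strictL _ ih => exact fun hl => .strictL (ih hl)
  | strictR _ ih => exact fun hl => .strictR (ih hl)
  | seqL _ ih => exact fun hl => .seqL (ih hl)
  | seqR _ ih => exact fun hl => .seqR (ih hl)
  | parL _ ih => exact fun hl => .parL (ih hl)
  | parR _ ih => exact fun hl => .parR (ih hl)

lemma prune_rmv {H : Set Λ} :
    ∀ {i : Interaction Λ M} {l i'}, Prunes i l i' → l ∉ H → Prunes (rmv H i) l (rmv H i') := by
  intro i l i' h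
  induction h with
  | empty => exact fun _ => .empty _
  | @act a l hne =>
    intro _
    rw [rmv_act]
    by_cases hm : a.lifeline ∈ H
    · rw [if_pos hm]; exact .empty l
    · rw [if_neg hm]; exact .act hne
  | strict _ _ ih1 ih2 => exact fun hl => .strict (ih1 hl) (ih2 hl)
  | seq _ _ ih1 ih2 => exact fun hl => .seq (ih1 hl) (ih2 hl)
  | par _ _ ih1 ih2 => exact fun hl => .par (ih1 hl) (ih2 hl)
  | altBoth _ _ ih1 ih2 => exact fun hl => .altBoth (ih1 hl) (ih2 hl)
  | altL _ hc ih => exact fun hl => .altL (ih hl) (collides_rmv hc hl)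
  | altR _ hc ih => exact fun hl => .altR (ih hl) (collides_rmv hc hl)
  | loopS _ ih => exact fun hl => .loopS (ih hl)
  | loopW _ ih => exact fun hl => .loopW (ih hl)
  | loopP _ ih => exact fun hl => .loopP (ih hl)
  | loopSElim hc => exact fun hl => .loopSElim (collides_rmv hc hl)
  | loopWElim hc => exact fun hl => .loopWElim (collides_rmv hc hl)
  | loopPElim hc => exact fun hl => .loopPElim (collides_rmv hc hl)

lemma exec_rmv {H : Set Λ} :
    ∀ {i i' : Interaction Λ M} {a p}, Executes i a p i' → a.lifeline ∉ H →
      Executes (rmv H i) a p (rmv H i') := by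
  intro i i' a p h
  induction h with
  | act a =>
    intro ha
    rw [rmv_act, if_neg ha]
    exact .act a
  | altL _ _ ih => exact fun ha => .altL _ (ih ha)
  | altR _ _ ih => exact fun ha => .altR _ (ih ha)
  | parL _ _ ih => exact fun ha => .parL _ (ih ha)
  | parR _ _ ih => exact fun ha => .parR _ (ih ha)
  | strictL _ _ ih => exact fun ha => .strictL _ (ih ha)
  | strictR hterm _ ih => exact fun ha => .strictR (term_rmv hterm) (ih ha)
  | seqL _ _ ih => exact fun ha => .seqL _ (ih ha)
  | seqR hp _ ih => exact fun ha => .seqR (prune_rmv hp ha) (ih ha)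
  | loopS _ ih => exact fun ha => .loopS (ih ha)
  | loopW _ hpr ih => exact fun ha => .loopW (ih ha) (prune_rmv hpr ha)
  | loopP _ ih => exact fun ha => .loopP (ih ha)

lemma rmv_comp (H H' : Set Λ) : ∀ i : Interaction Λ M, rmv H' (rmv H i) = rmv (H ∪ H') i := by
  intro i
  induction i with
  | empty => rfl
  | act a =>
    by_cases h : a.lifeline ∈ H
    · rw [rmv_act, if_pos h, rmv_empty, rmv_act, if_pos (Set.mem_union_left _ h)]
    · by_cases h' : a.lifeline ∈ H'
      · rw [rmv_act, if_neg h, rmv_act, if_pos h', rmv_act,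
          if_pos (Set.mem_union_right _ h')]
      · rw [rmv_act, if_neg h, rmv_act, if_neg h', rmv_act,
          if_neg (by simp [Set.mem_union, h, h'])]
  | strict i1 i2 ih1 ih2 => simp [ih1, ih2]
  | seq i1 i2 ih1 ih2 => simp [ih1, ih2]
  | par i1 i2 ih1 ih2 => simp [ih1, ih2]
  | alt i1 i2 ih1 ih2 => simp [ih1, ih2]
  | loopS i ih => simp [ih]
  | loopW i ih => simp [ih]
  | loopP i ih => simp [ih]

lemma rmv_single {H : Set Λ} {l : Λ} :
    ∀ {i : Interaction Λ M}, i.lifelinesIn (H ∪ {l}) → (rmv H i).lifelinesIn {l} := by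
  intro i
  induction i with
  | empty => exact fun _ => trivial
  | act a =>
    intro h
    by_cases hm : a.lifeline ∈ H
    · rw [rmv_act, if_pos hm]; trivial
    · rw [rmv_act, if_neg hm]
      rcases h with h | h
      · exact absurd h hm
      · exact h
  | loopS i ih => exact ih
  | loopW i ih => exact ih
  | loopP i ih => exact ih
  | strict i1 i2 ih1 ih2 => exact fun h => ⟨ih1 h.1, ih2 h.2⟩
  | seq i1 i2 ih1 ih2 => exact fun h => ⟨ih1 h.1, ih2 h.2⟩
  | par i1 i2 ih1 ih2 => exact fun h => ⟨ih1 h.1, ih2 h.2⟩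
  | alt i1 i2 ih1 ih2 => exact fun h => ⟨ih1 h.1, ih2 h.2⟩

lemma rmv_diff {H L : Set Λ} :
    ∀ {i : Interaction Λ M}, i.lifelinesIn L → (rmv H i).lifelinesIn (L \ H) := by
  intro i
  induction i with
  | empty => exact fun _ => trivial
  | act a =>
    intro h
    by_cases hm : a.lifeline ∈ H
    · rw [rmv_act, if_pos hm]; trivial
    · rw [rmv_act, if_neg hm]; exact ⟨h, hm⟩
  | loopS i ih => exact ih
  | loopW i ih => exact ih
  | loopP i ih => exact ih
  | strict i1 i2 ih1 ih2 => exact fun h => ⟨ih1 h.1, ih2 h.2⟩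
  | seq i1 i2 ih1 ih2 => exact fun h => ⟨ih1 h.1, ih2 h.2⟩
  | par i1 i2 ih1 ih2 => exact fun h => ⟨ih1 h.1, ih2 h.2⟩
  | alt i1 i2 ih1 ih2 => exact fun h => ⟨ih1 h.1, ih2 h.2⟩

/-! ### Shuffle lemmas -/

lemma shuffle_nil_l {α : Type} : ∀ (v : List α), ListShuffle [] v v := by
  intro v
  induction v with
  | nil => exact .nil
  | cons a v ih => exact .right a ih

lemma shuffle_append {α : Type} : ∀ (u v : List α), ListShuffle u v (u ++ v) := by
  intro u v
  induction u with
  | nil => simpa using shuffle_nil_l v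
  | cons a u ih => exact .left a ih

lemma shuffle_comm {α : Type} : ∀ {u v t : List α}, ListShuffle u v t → ListShuffle v u t := by
  intro u v t h
  induction h with
  | nil => exact .nil
  | left a _ ih => exact .right a ih
  | right a _ ih => exact .left a ih

lemma shuffle_length {α : Type} :
    ∀ {u v t : List α}, ListShuffle u v t → t.length = u.length + v.length := by
  intro u v t h
  induction h with
  | nil => rfl
  | left a _ ih => simp only [List.length_cons, ih]; omega
  | right a _ ih => simp only [List.length_cons, ih]; omega

lemma shuffle_assoc {α : Type} :
    ∀ {s z t : List α}, ListShuffle s z t → ∀ {x y : List α}, ListShuffle x y s →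
      ∃ w, ListShuffle y z w ∧ ListShuffle x w t := by
  intro s z t h2
  induction h2 with
  | nil =>
    intro x y h1
    cases h1
    exact ⟨[], .nil, .nil⟩
  | @left s' z' t' a _ ih =>
    intro x y h1
    cases h1 with
    | left _ h1' =>
      obtain ⟨w, hw1, hw2⟩ := ih h1'
      exact ⟨w, hw1, .left a hw2⟩
    | right _ h1' =>
      obtain ⟨w, hw1, hw2⟩ := ih h1'
      exact ⟨a :: w, .left a hw1, .right a hw2⟩
  | @right s' z' t' a _ ih =>
    intro x y h1
    obtain ⟨w, hw1, hw2⟩ := ih h1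
    exact ⟨a :: w, .right a hw1, .right a hw2⟩

/-- Iterated shuffle closure of a set of traces. -/
inductive ShClos (P : List (Action Λ M) → Prop) : List (Action Λ M) → Prop where
  | nil : ShClos P []
  | cons {u v t} : P u → ShClos P v → ListShuffle u v t → ShClos P t

lemma shClos_mono {P Q : List (Action Λ M) → Prop} (h : ∀ t, P t → Q t) :
    ∀ {t}, ShClos P t → ShClos Q t := by
  intro t hc
  induction hc with
  | nil => exact .nil
  | cons hu _ hsh ih => exact .cons (h _ hu) ih hsh

/-! ### Language (operational trace) lemmas -/

lemma alt_constrL : ∀ {A : Interaction Λ M} {t}, OpTrace A t → ∀ B, OpTrace (.alt A B) t := by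
  intro A t h B
  cases h with
  | empty hterm => exact .empty (.altL hterm)
  | step hex htr => exact .step (.altL B hex) htr

lemma alt_constrR : ∀ {B : Interaction Λ M} {t}, OpTrace B t → ∀ A, OpTrace (.alt A B) t := by
  intro B t h A
  cases h with
  | empty hterm => exact .empty (.altR hterm)
  | step hex htr => exact .step (.altR A hex) htr

lemma alt_inv {A B : Interaction Λ M} {t} (h : OpTrace (.alt A B) t) :
    OpTrace A t ∨ OpTrace B t := by
  cases h with
  | empty hterm =>
    cases hterm with
    | altL h => exact .inl (.empty h)
    | altR h => exact .inr (.empty h)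
  | step hex htr =>
    cases hex with
    | altL _ h => exact .inl (.step h htr)
    | altR _ h => exact .inr (.step h htr)

lemma strict_inv : ∀ {j : Interaction Λ M} {t}, OpTrace j t →
    ∀ {A B}, j = .strict A B → ∃ tA tB, OpTrace A tA ∧ OpTrace B tB ∧ t = tA ++ tB := by
  intro j t h
  induction h with
  | empty hterm =>
    rintro A B rfl
    cases hterm with | strict h1 h2 => exact ⟨[], [], .empty h1, .empty h2, rfl⟩
  | @step i i' a p t hex htr ih =>
    rintro A B rfl
    cases hex with
    | strictL i2 hex1 =>
      obtain ⟨tA, tB, h1, h2, rfl⟩ := ih rfl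
      exact ⟨a :: tA, tB, .step hex1 h1, h2, rfl⟩
    | strictR hterm hex2 =>
      exact ⟨[], a :: t, .empty hterm, .step hex2 htr, rfl⟩

lemma strict_constr_aux {B : Interaction Λ M} {tB} (h : OpTrace B tB) {A}
    (hA : Terminates A) : OpTrace (.strict A B) tB := by
  cases h with
  | empty h => exact .empty (.strict hA h)
  | step hex htr => exact .step (.strictR hA hex) htr

lemma strict_constr : ∀ {A : Interaction Λ M} {tA}, OpTrace A tA →
    ∀ {B tB}, OpTrace B tB → OpTrace (.strict A B) (tA ++ tB) := by
  intro A tA h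
  induction h with
  | empty hA => intro B tB hB; simpa using strict_constr_aux hB hA
  | step hex _ ih => intro B tB hB; exact .step (.strictL _ hex) (ih hB)

lemma seq_inv {l : Λ} : ∀ {j : Interaction Λ M} {t}, OpTrace j t →
    ∀ {A B}, j = .seq A B → A.lifelinesIn {l} → B.lifelinesIn {l} →
      ∃ tA tB, OpTrace A tA ∧ OpTrace B tB ∧ t = tA ++ tB := by
  intro j t h
  induction h with
  | empty hterm =>
    rintro A B rfl _ _
    cases hterm with | seq h1 h2 => exact ⟨[], [], .empty h1, .empty h2, rfl⟩
  | @step i i' a p t hex htr ih =>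
    rintro A B rfl hA hB
    cases hex with
    | seqL i2 hex1 =>
      obtain ⟨tA, tB, h1, h2, rfl⟩ := ih rfl (exec_lifelinesIn hex1 hA) hB
      exact ⟨a :: tA, tB, .step hex1 h1, h2, rfl⟩
    | @seqR i1 i1' i2 i2' _ _ hp hex2 =>
      have hal : a.lifeline = l := exec_action_mem hex2 hB
      have hinert : Inert i1' := prune_at_l_inert (hal ▸ hp) hA
      obtain ⟨tA, tB, h1, h2, heq⟩ :=
        ih rfl (prune_lifelinesIn hp hA) (exec_lifelinesIn hex2 hB)
      have htA : tA = [] := inert_lang hinert h1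
      subst htA
      simp only [List.nil_append] at heq
      exact ⟨[], a :: tB, .empty (prune_term hp (inert_term hinert)), .step hex2 h2,
        by rw [heq]; rfl⟩

lemma seq_constr_aux : ∀ {B : Interaction Λ M} {tB}, OpTrace B tB →
    ∀ {A}, Terminates A → OpTrace (.seq A B) tB := by
  intro B tB h
  induction h with
  | empty h => exact fun hA => .empty (.seq hA h)
  | @step i i' a p t hex _ ih =>
    intro A hA
    obtain ⟨A', hp, hA'⟩ := term_prune hA a.lifeline
    exact .step (.seqR hp hex) (ih hA')

lemma seq_constr : ∀ {A : Interaction Λ M} {tA}, OpTrace A tA →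
    ∀ {B tB}, OpTrace B tB → OpTrace (.seq A B) (tA ++ tB) := by
  intro A tA h
  induction h with
  | empty hA => intro B tB hB; simpa using seq_constr_aux hB hA
  | step hex _ ih => intro B tB hB; exact .step (.seqL _ hex) (ih hB)

lemma par_inv : ∀ {j : Interaction Λ M} {t}, OpTrace j t →
    ∀ {A B}, j = .par A B →
      ∃ u v, OpTrace A u ∧ OpTrace B v ∧ ListShuffle u v t := by
  intro j t h
  induction h with
  | empty hterm =>
    rintro A B rfl
    cases hterm with | par h1 h2 => exact ⟨[], [], .empty h1, .empty h2, .nil⟩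
  | @step i i' a p t hex htr ih =>
    rintro A B rfl
    cases hex with
    | parL i2 hex1 =>
      obtain ⟨u, v, h1, h2, hsh⟩ := ih rfl
      exact ⟨a :: u, v, .step hex1 h1, h2, .left a hsh⟩
    | parR i1 hex2 =>
      obtain ⟨u, v, h1, h2, hsh⟩ := ih rfl
      exact ⟨u, a :: v, h1, .step hex2 h2, .right a hsh⟩

lemma par_constr : ∀ {u v t : List (Action Λ M)}, ListShuffle u v t →
    ∀ {A B : Interaction Λ M}, OpTrace A u → OpTrace B v → OpTrace (.par A B) t := by
  intro u v t hsh
  induction hsh with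
  | nil => exact fun hA hB => .empty (.par (opTrace_nil hA) (opTrace_nil hB))
  | left a _ ih =>
    intro A B hA hB
    obtain ⟨p, A', hex, hA'⟩ := opTrace_cons hA
    exact .step (.parL _ hex) (ih hA' hB)
  | right a _ ih =>
    intro A B hA hB
    obtain ⟨p, B', hex, hB'⟩ := opTrace_cons hB
    exact .step (.parR _ hex) (ih hA hB')

lemma loopS_inv : ∀ (n : ℕ) {A : Interaction Λ M} {t}, t.length ≤ n → OpTrace (.loopS A) t →
    ∃ ts : List (List (Action Λ M)), (∀ u ∈ ts, OpTrace A u) ∧ t = ts.flatten := by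
  intro n
  induction n with
  | zero =>
    intro A t hlen _
    have ht : t = [] := List.eq_nil_of_length_eq_zero (Nat.le_zero.mp hlen)
    exact ⟨[], by simp, by simp [ht]⟩
  | succ n ih =>
    intro A t hlen h
    cases h with
    | empty _ => exact ⟨[], by simp, rfl⟩
    | @step i i' a p t' hex htr =>
      cases hex with
      | @loopS i1 i1' _ _ hex1 =>
        obtain ⟨u, v, hu, hv, rfl⟩ := strict_inv htr rfl
        have hlenv : v.length ≤ n := by
          simp only [List.length_cons, List.length_append] at hlen
          omega
        obtain ⟨ts, hts, rfl⟩ := ih hlenv hv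
        refine ⟨(a :: u) :: ts, ?_, by simp⟩
        intro w hw
        rcases List.mem_cons.mp hw with rfl | hw
        · exact .step hex1 hu
        · exact hts w hw

lemma loopS_constr : ∀ (ts : List (List (Action Λ M))) {A},
    (∀ u ∈ ts, OpTrace A u) → OpTrace (.loopS A) ts.flatten := by
  intro ts
  induction ts with
  | nil => exact fun _ => .empty (.loopS _)
  | cons u ts ih =>
    intro A h
    have hu := h u (by simp)
    have hts : ∀ w ∈ ts, OpTrace A w := fun w hw => h w (by simp [hw])
    cases u with
    | nil => simpa using ih hts
    | cons a u' =>
      obtain ⟨p, A', hex, hu'⟩ := opTrace_cons hu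
      have hstep : OpTrace (.strict A' (.loopS A)) (u' ++ ts.flatten) :=
        strict_constr hu' (ih hts)
      simpa using OpTrace.step (.loopS hex) hstep

lemma loopW_prunable (A : Interaction Λ M) (l : Λ) :
    ∃ PR, Prunes (.loopW A) l PR ∧ Terminates PR := by
  rcases prunes_total A l with ⟨A', h⟩ | c
  · exact ⟨_, .loopW h, .loopW _⟩
  · exact ⟨_, .loopWElim c, .empty⟩

lemma loopW_inv {l : Λ} : ∀ (n : ℕ) {A : Interaction Λ M} {t}, A.lifelinesIn {l} →
    t.length ≤ n → OpTrace (.loopW A) t →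
    ∃ ts : List (List (Action Λ M)), (∀ u ∈ ts, OpTrace A u) ∧ t = ts.flatten := by
  intro n
  induction n with
  | zero =>
    intro A t _ hlen _
    have ht : t = [] := List.eq_nil_of_length_eq_zero (Nat.le_zero.mp hlen)
    exact ⟨[], by simp, by simp [ht]⟩
  | succ n ih =>
    intro A t hA hlen h
    cases h with
    | empty _ => exact ⟨[], by simp, rfl⟩
    | @step i i' a p t' hex htr =>
      cases hex with
      | @loopW i1 i1' i'' _ _ hex1 hpr =>
        have hal : a.lifeline = l := exec_action_mem hex1 hA
        have hpr' : Prunes (Interaction.loopW A) l i'' := hal ▸ hpr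
        have hin : Inert i'' := prune_at_l_inert hpr' hA
        obtain ⟨t0, rest, h0, hrest, rfl⟩ :=
          seq_inv (l := l) htr rfl (prune_lifelinesIn hpr hA)
            ⟨exec_lifelinesIn hex1 hA, hA⟩
        have ht0 : t0 = [] := inert_lang hin h0
        subst ht0
        obtain ⟨u, v, hu, hv, rfl⟩ :=
          seq_inv (l := l) hrest rfl (exec_lifelinesIn hex1 hA) hA
        have hlenv : v.length ≤ n := by
          simp only [List.length_cons, List.length_append, List.nil_append] at hlen ⊢
          omega
        obtain ⟨ts, hts, rfl⟩ := ih hA hlenv hv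
        refine ⟨(a :: u) :: ts, ?_, by simp⟩
        intro w hw
        rcases List.mem_cons.mp hw with rfl | hw
        · exact .step hex1 hu
        · exact hts w hw

lemma loopW_constr : ∀ (ts : List (List (Action Λ M))) {A},
    (∀ u ∈ ts, OpTrace A u) → OpTrace (.loopW A) ts.flatten := by
  intro ts
  induction ts with
  | nil => exact fun _ => .empty (.loopW _)
  | cons u ts ih =>
    intro A h
    have hu := h u (by simp)
    have hts : ∀ w ∈ ts, OpTrace A w := fun w hw => h w (by simp [hw])
    cases u with
    | nil => simpa using ih hts
    | cons a u' =>
      obtain ⟨p, A', hex, hu'⟩ := opTrace_cons hu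
      obtain ⟨PR, hpr, hPRt⟩ := loopW_prunable A a.lifeline
      have h1 : OpTrace (.seq A' (.loopW A)) (u' ++ ts.flatten) := seq_constr hu' (ih hts)
      have h2 : OpTrace (.seq PR (.seq A' (.loopW A))) (u' ++ ts.flatten) :=
        seq_constr_aux h1 hPRt
      simpa using OpTrace.step (.loopW hex hpr) h2

lemma loopP_inv : ∀ (n : ℕ) {A : Interaction Λ M} {t}, t.length ≤ n →
    OpTrace (.loopP A) t → ShClos (OpTrace A) t := by
  intro n
  induction n with
  | zero =>
    intro A t hlen _
    have ht : t = [] := List.eq_nil_of_length_eq_zero (Nat.le_zero.mp hlen)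
    rw [ht]; exact .nil
  | succ n ih =>
    intro A t hlen h
    cases h with
    | empty _ => exact .nil
    | @step i i' a p t' hex htr =>
      cases hex with
      | @loopP i1 i1' _ _ hex1 =>
        obtain ⟨u, v, hu, hv, hsh⟩ := par_inv htr rfl
        have hlenv : v.length ≤ n := by
          have := shuffle_length hsh
          simp only [List.length_cons] at hlen
          omega
        exact .cons (.step hex1 hu) (ih hlenv hv) (.left a hsh)

lemma loopP_constr : ∀ (n : ℕ) {A : Interaction Λ M} {t}, t.length ≤ n →
    ShClos (OpTrace A) t → OpTrace (.loopP A) t := by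
  intro n
  induction n with
  | zero =>
    intro A t hlen _
    have ht : t = [] := List.eq_nil_of_length_eq_zero (Nat.le_zero.mp hlen)
    rw [ht]; exact .empty (.loopP _)
  | succ n ihn =>
    intro A t hlen hc
    induction hc with
    | nil => exact .empty (.loopP _)
    | @cons u v t hu hv hsh ihv =>
      clear hv
      cases hsh with
      | nil => exact .empty (.loopP _)
      | @left t1 t2 t' a hsh' =>
        -- u = a :: t1, t = a :: t'
        obtain ⟨p, A', hex, hu'⟩ := opTrace_cons hu
        have hvlen : v.length ≤ n + 1 := by
          have := shuffle_length hsh'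
          simp only [List.length_cons] at hlen
          omega
        have hv' := ihv hvlen
        exact .step (.loopP hex) (par_constr hsh' hu' hv')
      | @right t1 t2 t' a hsh' =>
        -- u = t1, v = a :: t2, t = a :: t'
        have hv' : OpTrace (.loopP A) (a :: t2) := ihv (by
          have := shuffle_length hsh'
          simp only [List.length_cons] at hlen ⊢
          omega)
        obtain ⟨q, P', hexP, hP'⟩ := opTrace_cons hv'
        cases hexP with
        | @loopP i1 k _ _ hk =>
          obtain ⟨vk, vJ, hvk, hvJ, hshv⟩ := par_inv hP' rfl
          obtain ⟨w, hw1, hw2⟩ := shuffle_assoc (shuffle_comm hsh') hshv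
          -- hw1 : ListShuffle vJ t1 w, hw2 : ListShuffle vk w t'
          have hShw : ShClos (OpTrace A) w :=
            .cons hu (loopP_inv vJ.length le_rfl hvJ) (shuffle_comm hw1)
          have hwlen : w.length ≤ n := by
            have l1 := shuffle_length hw1
            have l2 := shuffle_length hw2
            have l3 := shuffle_length hsh'
            simp only [List.length_cons] at hlen
            omega
          have hw : OpTrace (.loopP A) w := ihn hwlen hShw
          exact .step (.loopP hk) (par_constr hw2 hvk hw)

/-! ### Language containment lemmas for pruning and execution under `rmv` -/

lemma prunes_rmv_lang {H : Set Λ} {l : Λ} :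
    ∀ {i : Interaction Λ M} {l' j'}, Prunes i l' j' → i.lifelinesIn (H ∪ {l}) →
      ∀ t, OpTrace (rmv H j') t → OpTrace (rmv H i) t := by
  intro i l' j' h
  induction h with
  | empty => exact fun _ _ h => h
  | act _ => exact fun _ _ h => h
  | @strict i1 i2 i1' i2' _ h1 h2 ih1 ih2 =>
    intro hi t ht
    rw [rmv_strict] at ht ⊢
    obtain ⟨tA, tB, hA, hB, rfl⟩ := strict_inv ht rfl
    exact strict_constr (ih1 hi.1 tA hA) (ih2 hi.2 tB hB)
  | @seq i1 i2 i1' i2' _ h1 h2 ih1 ih2 =>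
    intro hi t ht
    rw [rmv_seq] at ht ⊢
    obtain ⟨tA, tB, hA, hB, rfl⟩ := seq_inv (l := l) ht rfl
      (rmv_single (prune_lifelinesIn h1 hi.1)) (rmv_single (prune_lifelinesIn h2 hi.2))
    exact seq_constr (ih1 hi.1 tA hA) (ih2 hi.2 tB hB)
  | @par i1 i2 i1' i2' _ h1 h2 ih1 ih2 =>
    intro hi t ht
    rw [rmv_par] at ht ⊢
    obtain ⟨u, v, hA, hB, hsh⟩ := par_inv ht rfl
    exact par_constr hsh (ih1 hi.1 u hA) (ih2 hi.2 v hB)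
  | @altBoth i1 i2 i1' i2' _ h1 h2 ih1 ih2 =>
    intro hi t ht
    rw [rmv_alt] at ht ⊢
    rcases alt_inv ht with h | h
    · exact alt_constrL (ih1 hi.1 t h) _
    · exact alt_constrR (ih2 hi.2 t h) _
  | @altL i1 i2 i1' _ h1 hc ih =>
    intro hi t ht
    rw [rmv_alt]
    exact alt_constrL (ih hi.1 t ht) _
  | @altR i1 i2 i2' _ h2 hc ih =>
    intro hi t ht
    rw [rmv_alt]
    exact alt_constrR (ih hi.2 t ht) _
  | @loopS i1 i1' _ h1 ih =>
    intro hi t ht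
    rw [rmv_loopS] at ht ⊢
    obtain ⟨ts, hts, rfl⟩ := loopS_inv t.length le_rfl ht
    exact loopS_constr ts (fun u hu => ih hi u (hts u hu))
  | @loopW i1 i1' _ h1 ih =>
    intro hi t ht
    rw [rmv_loopW] at ht ⊢
    obtain ⟨ts, hts, rfl⟩ := loopW_inv (l := l) t.length
      (rmv_single (prune_lifelinesIn h1 hi)) le_rfl ht
    exact loopW_constr ts (fun u hu => ih hi u (hts u hu))
  | @loopP i1 i1' _ h1 ih =>
    intro hi t ht
    rw [rmv_loopP] at ht ⊢
    exact loopP_constr t.length le_rfl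
      (shClos_mono (fun u hu => ih hi u hu) (loopP_inv t.length le_rfl ht))
  | loopSElim _ =>
    intro _ t ht
    rw [rmv_empty] at ht
    rw [empty_lang ht, rmv_loopS]
    exact .empty (.loopS _)
  | loopWElim _ =>
    intro _ t ht
    rw [rmv_empty] at ht
    rw [empty_lang ht, rmv_loopW]
    exact .empty (.loopW _)
  | loopPElim _ =>
    intro _ t ht
    rw [rmv_empty] at ht
    rw [empty_lang ht, rmv_loopP]
    exact .empty (.loopP _)

/-- Key lemma: executing an action whose lifeline is removed can only shrink
the language of the projection. -/
lemma exec_rmv_lang {H : Set Λ} {l : Λ} :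
    ∀ {i i' : Interaction Λ M} {a p}, Executes i a p i' → a.lifeline ∈ H →
      i.lifelinesIn (H ∪ {l}) → ∀ t, OpTrace (rmv H i') t → OpTrace (rmv H i) t := by
  intro i i' a p hex
  induction hex with
  | act a =>
    intro ha _ t ht
    rw [rmv_empty] at ht
    rw [rmv_act, if_pos ha]
    exact ht
  | @altL i1 i1' _ _ i2 hex1 ih =>
    intro ha hi t ht
    rw [rmv_alt]
    exact alt_constrL (ih ha hi.1 t ht) _
  | @altR i2 i2' _ _ i1 hex2 ih =>
    intro ha hi t ht
    rw [rmv_alt]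
    exact alt_constrR (ih ha hi.2 t ht) _
  | @parL i1 i1' _ _ i2 hex1 ih =>
    intro ha hi t ht
    rw [rmv_par] at ht ⊢
    obtain ⟨u, v, hu, hv, hsh⟩ := par_inv ht rfl
    exact par_constr hsh (ih ha hi.1 u hu) hv
  | @parR i2 i2' _ _ i1 hex2 ih =>
    intro ha hi t ht
    rw [rmv_par] at ht ⊢
    obtain ⟨u, v, hu, hv, hsh⟩ := par_inv ht rfl
    exact par_constr hsh hu (ih ha hi.2 v hv)
  | @strictL i1 i1' _ _ i2 hex1 ih =>
    intro ha hi t ht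
    rw [rmv_strict] at ht ⊢
    obtain ⟨u, v, hu, hv, rfl⟩ := strict_inv ht rfl
    exact strict_constr (ih ha hi.1 u hu) hv
  | @strictR i1 i2 i2' _ _ hterm hex2 ih =>
    intro ha hi t ht
    rw [rmv_strict]
    have h2 := ih ha hi.2 t ht
    simpa using strict_constr (OpTrace.empty (term_rmv hterm)) h2
  | @seqL i1 i1' _ _ i2 hex1 ih =>
    intro ha hi t ht
    rw [rmv_seq] at ht ⊢
    obtain ⟨u, v, hu, hv, rfl⟩ := seq_inv (l := l) ht rfl
      (rmv_single (exec_lifelinesIn hex1 hi.1)) (rmv_single hi.2)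
    exact seq_constr (ih ha hi.1 u hu) hv
  | @seqR i1 i1' i2 i2' a p hp hex2 ih =>
    intro ha hi t ht
    rw [rmv_seq] at ht ⊢
    obtain ⟨u, v, hu, hv, rfl⟩ := seq_inv (l := l) ht rfl
      (rmv_single (prune_lifelinesIn hp hi.1)) (rmv_single (exec_lifelinesIn hex2 hi.2))
    exact seq_constr (prunes_rmv_lang hp hi.1 u hu) (ih ha hi.2 v hv)
  | @loopS i1 i1' a p hex1 ih =>
    intro ha hi t ht
    rw [rmv_strict, rmv_loopS] at ht
    rw [rmv_loopS]
    obtain ⟨u, v, hu, hv, rfl⟩ := strict_inv ht rfl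
    obtain ⟨ts, hts, rfl⟩ := loopS_inv v.length le_rfl hv
    have hu' := ih ha hi u hu
    have := loopS_constr (u :: ts) (by
      intro w hw
      rcases List.mem_cons.mp hw with rfl | hw
      · exact hu'
      · exact hts w hw)
    simpa using this
  | @loopW i1 i1' i'' a p hex1 hpr ih =>
    intro ha hi t ht
    rw [rmv_seq, rmv_seq, rmv_loopW] at ht
    rw [rmv_loopW]
    have hs1 : (rmv H i'').lifelinesIn {l} := rmv_single (prune_lifelinesIn hpr hi)
    have hs2 : (rmv H i1').lifelinesIn {l} := rmv_single (exec_lifelinesIn hex1 hi)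
    have hs3 : (rmv H i1).lifelinesIn {l} := rmv_single hi
    obtain ⟨t0, rest, h0, hrest, rfl⟩ := seq_inv (l := l) ht rfl hs1 ⟨hs2, hs3⟩
    obtain ⟨u, v, hu, hv, rfl⟩ := seq_inv (l := l) hrest rfl hs2 hs3
    have h0' : OpTrace (.loopW (rmv H i1)) t0 := by
      have := prunes_rmv_lang (l := l) hpr hi t0 h0
      rwa [rmv_loopW] at this
    obtain ⟨ts0, hts0, rfl⟩ := loopW_inv (l := l) t0.length hs3 le_rfl h0'
    obtain ⟨ts2, hts2, rfl⟩ := loopW_inv (l := l) v.length hs3 le_rfl hv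
    have hu' := ih ha hi u hu
    have := loopW_constr (ts0 ++ u :: ts2) (by
      intro w hw
      rcases List.mem_append.mp hw with hw | hw
      · exact hts0 w hw
      · rcases List.mem_cons.mp hw with rfl | hw
        · exact hu'
        · exact hts2 w hw)
    simpa using this
  | @loopP i1 i1' a p hex1 ih =>
    intro ha hi t ht
    rw [rmv_par, rmv_loopP] at ht
    rw [rmv_loopP]
    obtain ⟨u, v, hu, hv, hsh⟩ := par_inv ht rfl
    have hcl := loopP_inv v.length le_rfl hv
    exact loopP_constr t.length le_rfl (.cons (ih ha hi u hu) hcl hsh)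

/-! ### Every interaction accepts some trace -/

lemma exists_trace : ∀ i : Interaction Λ M, ∃ t, OpTrace i t := by
  intro i
  induction i with
  | empty => exact ⟨[], .empty .empty⟩
  | act a => exact ⟨[a], .step (.act a) (.empty .empty)⟩
  | loopS i _ => exact ⟨[], .empty (.loopS i)⟩
  | loopW i _ => exact ⟨[], .empty (.loopW i)⟩
  | loopP i _ => exact ⟨[], .empty (.loopP i)⟩
  | strict i1 i2 ih1 ih2 =>
    obtain ⟨t1, h1⟩ := ih1
    obtain ⟨t2, h2⟩ := ih2
    exact ⟨t1 ++ t2, strict_constr h1 h2⟩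
  | seq i1 i2 ih1 ih2 =>
    obtain ⟨t1, h1⟩ := ih1
    obtain ⟨t2, h2⟩ := ih2
    exact ⟨t1 ++ t2, seq_constr h1 h2⟩
  | par i1 i2 ih1 ih2 =>
    obtain ⟨t1, h1⟩ := ih1
    obtain ⟨t2, h2⟩ := ih2
    exact ⟨t1 ++ t2, par_constr (shuffle_append t1 t2) h1 h2⟩
  | alt i1 i2 ih1 _ =>
    obtain ⟨t1, h1⟩ := ih1
    exact ⟨t1, alt_constrL h1 i2⟩

/-! ### Main invariant of the analysis graph -/

lemma main_inv : ∀ {v : Vertex Λ M}, Relation.ReflTransGen Step v .ok →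
    ∀ {L : Set Λ} {i μ}, v = .node L i μ → i.lifelinesIn L → ∀ l ∈ L,
      ∃ s, OpTrace (rmv (L \ {l}) i) (μ l ++ s) := by
  intro v hrun
  induction hrun using Relation.ReflTransGen.head_induction_on with
  | refl => intro L i μ h; cases h
  | head hstep hrest ih =>
    intro L i μ hv hi l hl
    subst hv
    rcases hstep with hok | hrmv | hex
    · cases hok with
      | mk L' i' =>
        obtain ⟨t, ht⟩ := exists_trace (rmv (L \ {l}) i)
        exact ⟨t, by simpa [MultiTrace.eps] using ht⟩
    · cases hrmv with
      | mk L' H i' μ' hne hsub hemp =>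
        by_cases hlH : l ∈ H
        · obtain ⟨t, ht⟩ := exists_trace (rmv (L \ {l}) i)
          refine ⟨t, ?_⟩
          rw [hemp l hlH]
          simpa using ht
        · have hl' : l ∈ L \ H := ⟨hl, hlH⟩
          have hlin : (rmv H i).lifelinesIn (L \ H) := rmv_diff hi
          obtain ⟨s, hs⟩ := ih rfl hlin l hl'
          refine ⟨s, ?_⟩
          have e1 : MultiTrace.rmv H μ l = μ l := if_neg hlH
          rw [e1] at hs
          rw [rmv_comp] at hs
          have e2 : H ∪ ((L \ H) \ {l}) = L \ {l} := by
            ext x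
            simp only [Set.mem_union, Set.mem_diff, Set.mem_singleton_iff]
            constructor
            · rintro (hx | ⟨⟨h1, _⟩, h3⟩)
              · exact ⟨hsub.subset hx, fun he => hlH (he ▸ hx)⟩
              · exact ⟨h1, h3⟩
            · rintro ⟨hxL, hxl⟩
              by_cases hxH : x ∈ H
              · exact .inl hxH
              · exact .inr ⟨⟨hxL, hxH⟩, hxl⟩
          rw [e2] at hs
          exact hs
    · cases hex with
      | mk L' i0 i' a p μ' haL hexe =>
        have hi' := exec_lifelinesIn hexe hi
        obtain ⟨s, hs⟩ := ih rfl hi' l hl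
        by_cases hal : a.lifeline = l
        · have e : MultiTrace.prepend a μ' l = a :: μ' l := if_pos hal.symm
          rw [e]
          have hnot : a.lifeline ∉ L \ {l} := fun hmem => hmem.2 (by simpa using hal)
          have hexr : Executes (rmv (L \ {l}) i) a p (rmv (L \ {l}) i') :=
            exec_rmv hexe hnot
          exact ⟨s, .step hexr hs⟩
        · have e : MultiTrace.prepend a μ' l = μ' l := if_neg (fun h => hal h.symm)
          rw [e]
          have haH : a.lifeline ∈ L \ {l} := ⟨haL, by simpa using hal⟩
          have hiU : i.lifelinesIn ((L \ {l}) ∪ {l}) := by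
            refine lifelinesIn_mono ?_ hi
            intro x hx
            by_cases hxl : x = l
            · exact .inr (by simp [hxl])
            · exact .inl ⟨hx, hxl⟩
          exact ⟨s, exec_rmv_lang (l := l) hexe haH hiU _ hs⟩

/-- Build the local analysis run from an operational trace of the projection. -/
lemma run_of_opTrace {l : Λ} : ∀ (w : List (Action Λ M)) {j : Interaction Λ M} {t},
    OpTrace j (w ++ t) → (∀ a ∈ w, a.lifeline = l) →
    Relation.ReflTransGen Step (Vertex.node {l} j (localMT l w)) Vertex.ok := by
  intro w
  induction w with
  | nil =>
    intro j t _ _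
    have e : localMT l ([] : List (Action Λ M)) = MultiTrace.eps := by
      funext x
      simp [localMT, MultiTrace.eps]
    rw [e]
    exact Relation.ReflTransGen.single (Or.inl (StepOk.mk {l} j))
  | cons a w ih =>
    intro j t h hmem
    obtain ⟨p, j', hex, htr⟩ := opTrace_cons h
    have hal : a.lifeline = l := hmem a (by simp)
    have e : localMT l (a :: w) = MultiTrace.prepend a (localMT l w) := by
      funext x
      by_cases hx : x = l <;> simp [localMT, MultiTrace.prepend, hal, hx]
    rw [e]
    refine Relation.ReflTransGen.head (Or.inr (Or.inr ?_))
      (ih htr (fun b hb => hmem b (by simp [hb])))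
    exact StepExec.mk {l} j j' a p (localMT l w) (by simp [hal]) hex

end Aux

/-- soundness of local analyses : if `(i,μ) ⤳* Ok` then
for every lifeline `l ∈ L`, the local analysis on the projection of `i`
onto `l` and the look-ahead prefix `μ_|l[0..δ]` (viewed as a multi-trace
over `{l}`) also reaches `Ok`. -/
theorem statement17 {Λ M : Type} (L : Set Λ) (δ : ℕ)
    (i : Interaction Λ M) (μ : MultiTrace Λ M)
    (hi : i.lifelinesIn L) (hμ : MultiTrace.isOver L μ)
    (hok : Relation.ReflTransGen Step (Vertex.node L i μ) Vertex.ok) :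
    ∀ l ∈ L, Relation.ReflTransGen Step
      (Vertex.node {l} (rmv (L \ {l}) i) (localMT l ((μ l).take δ))) Vertex.ok := by
  intro l hl
  obtain ⟨s, hs⟩ := main_inv hok rfl hi l hl
  have e : μ l ++ s = (μ l).take δ ++ ((μ l).drop δ ++ s) := by
    rw [← List.append_assoc, List.take_append_drop]
  rw [e] at hs
  exact run_of_opTrace _ hs (fun a ha => hμ.2 l a (List.take_subset _ _ ha))

end RV
end

section
/- Termination is preserved by lifeline removal: for any interaction i ∈ 𝕀(L) and any set of lifelines H with ∅ ⊊ H ⊊ L, if i↓ then rmv_H(i)↓. -/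
open scoped Classical

namespace RV

variable {Λ M : Type}

namespace MultiTrace

/-- `μ ∈ 𝕄(L)` : components vanish outside `L` and every action of the
component on `l` occurs on `l`. -/
def overL (L : Set Λ) (μ : MultiTrace Λ M) : Prop :=
  (∀ l ∉ L, μ l = []) ∧ ∀ l, ∀ a ∈ μ l, a.lifeline = l

end MultiTrace

end RV

namespace RV

/-- termination is preserved by lifeline removal : for any
`i ∈ 𝕀(L)` and `∅ ⊊ H ⊊ L`, if `i ↓` then `rmv_H(i) ↓`. -/
theorem statement18 {Λ M : Type} (L H : Set Λ)
    (hH0 : H.Nonempty) (hHL : H ⊂ L)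
    (i : Interaction Λ M) (hi : i.lifelinesIn L)
    (h : Terminates i) : Terminates (rmv H i) := by
  clear hi
  induction h with
  | empty => exact .empty
  | altL _ ih => exact .altL ih
  | altR _ ih => exact .altR ih
  | strict _ _ ih1 ih2 => exact .strict ih1 ih2
  | seq _ _ ih1 ih2 => exact .seq ih1 ih2
  | par _ _ ih1 ih2 => exact .par ih1 ih2
  | loopS i => exact .loopS _
  | loopW i => exact .loopW _
  | loopP i => exact .loopP _

end RV
end

section
/- Collision is invariant under removal of other lifelines: for any interaction i ∈ 𝕀(L), any set of lifelines H with ∅ ⊊ H ⊊ L, and any lifeline l ∈ L∖H, one has i ⫫̸ l if and only if rmv_H(i) ⫫̸ l. -/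
open scoped Classical

namespace RV

variable {Λ M : Type}

namespace MultiTrace

/-- `μ ∈ 𝕄(L)` : components vanish outside `L` and every action of the
component on `l` occurs on `l`. -/
def over' (L : Set Λ) (μ : MultiTrace Λ M) : Prop :=
  (∀ l ∉ L, μ l = []) ∧ ∀ l, ∀ a ∈ μ l, a.lifeline = l

end MultiTrace

end RV

namespace RV

/-- collision is invariant under removal of other
lifelines : for `i ∈ 𝕀(L)`, `∅ ⊊ H ⊊ L` and `l ∈ L ∖ H`,
`i ⫫̸ l` iff `rmv_H(i) ⫫̸ l`. -/
theorem statement19 {Λ M : Type} (L H : Set Λ)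
    (hH0 : H.Nonempty) (hHL : H ⊂ L)
    (i : Interaction Λ M) (hi : i.lifelinesIn L)
    (l : Λ) (hl : l ∈ L \ H) :
    Collides i l ↔ Collides (rmv H i) l := by
  have hlH : l ∉ H := hl.2
  induction i with
  | empty => simp [rmv]
  | act a =>
    by_cases h : a.lifeline ∈ H
    · simp only [rmv, if_pos h]
      constructor
      · rintro ⟨rfl⟩; exact absurd h hlH
      · intro hc; cases hc
    · simp [rmv, if_neg h]
  | loopS i ih =>
    simp only [rmv]
    constructor <;> (intro h; cases h)
  | loopW i ih =>
    simp only [rmv]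
    constructor <;> (intro h; cases h)
  | loopP i ih =>
    simp only [rmv]
    constructor <;> (intro h; cases h)
  | strict i1 i2 ih1 ih2 =>
    simp only [rmv]
    constructor
    · rintro (h | h)
      · exact Collides.strictL ((ih1 hi.1).1 ‹_›)
      · exact Collides.strictR ((ih2 hi.2).1 ‹_›)
    · rintro (h | h)
      · exact Collides.strictL ((ih1 hi.1).2 ‹_›)
      · exact Collides.strictR ((ih2 hi.2).2 ‹_›)
  | seq i1 i2 ih1 ih2 =>
    simp only [rmv]
    constructor
    · rintro (h | h)
      · exact Collides.seqL ((ih1 hi.1).1 ‹_›)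
      · exact Collides.seqR ((ih2 hi.2).1 ‹_›)
    · rintro (h | h)
      · exact Collides.seqL ((ih1 hi.1).2 ‹_›)
      · exact Collides.seqR ((ih2 hi.2).2 ‹_›)
  | par i1 i2 ih1 ih2 =>
    simp only [rmv]
    constructor
    · rintro (h | h)
      · exact Collides.parL ((ih1 hi.1).1 ‹_›)
      · exact Collides.parR ((ih2 hi.2).1 ‹_›)
    · rintro (h | h)
      · exact Collides.parL ((ih1 hi.1).2 ‹_›)
      · exact Collides.parR ((ih2 hi.2).2 ‹_›)
  | alt i1 i2 ih1 ih2 =>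
    simp only [rmv]
    constructor
    · intro h
      cases h with
      | alt h1 h2 => exact Collides.alt ((ih1 hi.1).1 h1) ((ih2 hi.2).1 h2)
    · intro h
      cases h with
      | alt h1 h2 => exact Collides.alt ((ih1 hi.1).2 h1) ((ih2 hi.2).2 h2)

end RV
end
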